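/- arXiv:0906.4128 — 6 statements merged into one kernel-verified Lean document; each statement's English description precedes it below -/
import Mathlib

section
/- If (C, Δ) is a coassociative coalgebra over a commutative ring k and α : C → C is a coalgebra morphism, then C with the twisted comultiplication Δ_α = Δ ∘ α and the map α is a Hom-coassociative coalgebra; i.e., (α ⊗ α) ∘ Δ_α = Δ_α ∘ α and (α ⊗ Δ_α) ∘ Δ_α = (Δ_α ⊗ α) ∘ Δ_α. -/
open TensorProduct

/-- If `(C, Δ)` is a coassociative coalgebra and `α : C → C` a coalgebra
morphism, then `(C, Δ_α = Δ ∘ α, α)` is a Hom-coassociative coalgebra. -/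
theorem twisted_hom_coassociative_coalgebra
    {k : Type*} [CommRing k] {C : Type*} [AddCommGroup C] [Module k C]
    (Δ : C →ₗ[k] C ⊗[k] C)
    -- coassociativity: (Δ ⊗ Id) ∘ Δ = (Id ⊗ Δ) ∘ Δ (up to the associator)
    (hcoassoc : (TensorProduct.assoc k C C C).toLinearMap ∘ₗ
        TensorProduct.map Δ LinearMap.id ∘ₗ Δ = TensorProduct.map LinearMap.id Δ ∘ₗ Δ)
    (α : C →ₗ[k] C)
    -- α is a coalgebra morphism:
    (hα : Δ ∘ₗ α = TensorProduct.map α α ∘ₗ Δ) :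
    -- Δ_α = Δ ∘ α; comultiplicativity and Hom-coassociativity:
    (TensorProduct.map α α ∘ₗ (Δ ∘ₗ α) = (Δ ∘ₗ α) ∘ₗ α) ∧
    ((TensorProduct.assoc k C C C).toLinearMap ∘ₗ
        TensorProduct.map (Δ ∘ₗ α) α ∘ₗ (Δ ∘ₗ α)
      = TensorProduct.map α (Δ ∘ₗ α) ∘ₗ (Δ ∘ₗ α)) := by
  constructor
  · rw [← LinearMap.comp_assoc, ← hα, LinearMap.comp_assoc]
  · have h1 : TensorProduct.map (Δ ∘ₗ α) α
        = TensorProduct.map Δ LinearMap.id ∘ₗ TensorProduct.map α α := by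
      rw [← TensorProduct.map_comp]; simp
    have h2 : TensorProduct.map α (Δ ∘ₗ α)
        = TensorProduct.map LinearMap.id Δ ∘ₗ TensorProduct.map α α := by
      rw [← TensorProduct.map_comp]; simp
    have h3 : TensorProduct.map α α ∘ₗ (Δ ∘ₗ α) = Δ ∘ₗ (α ∘ₗ α) := by
      rw [← LinearMap.comp_assoc, ← hα, LinearMap.comp_assoc]
    rw [h1, h2, LinearMap.comp_assoc, LinearMap.comp_assoc, h3]
    have h4 : ((TensorProduct.assoc k C C C).toLinearMap ∘ₗ
        TensorProduct.map Δ LinearMap.id ∘ₗ Δ) ∘ₗ (α ∘ₗ α)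
        = (TensorProduct.map LinearMap.id Δ ∘ₗ Δ) ∘ₗ (α ∘ₗ α) := by rw [hcoassoc]
    simpa [LinearMap.comp_assoc] using h4
end

section
/- If (A, μ, Δ) is a bialgebra (compatibility: Δ(xy) = Δ(x)Δ(y) in A ⊗ A) and α : A → A is a bialgebra morphism, then A with twisted multiplication μ_α = α ∘ μ and twisted comultiplication Δ_α = Δ ∘ α satisfies the Hom-bialgebra compatibility condition Δ_α ∘ μ_α = (μ_α ⊗ μ_α) ∘ (Id ⊗ τ ⊗ Id) ∘ (Δ_α ⊗ Δ_α), where τ is the twist isomorphism on A ⊗ A. -/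
open TensorProduct

variable {k : Type*} [CommRing k] {A : Type*} [AddCommGroup A] [Module k A]

/-- Componentwise product `(μ ⊗ μ) ∘ (Id ⊗ τ ⊗ Id)` on `A ⊗ A`, applied to `Δ x ⊗ Δ y`:
`mulT2 μ (a ⊗ b) (c ⊗ d) = μ a c ⊗ μ b d`. -/
noncomputable def mulT2 (μ : A →ₗ[k] A →ₗ[k] A) (X Y : A ⊗[k] A) : A ⊗[k] A :=
  ((TensorProduct.map (TensorProduct.lift μ) (TensorProduct.lift μ)) ∘ₗ
    (TensorProduct.tensorTensorTensorComm k A A A A).toLinearMap) (X ⊗ₜ[k] Y)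

lemma mulT2_tmul (μ : A →ₗ[k] A →ₗ[k] A) (a b c d : A) :
    mulT2 μ (a ⊗ₜ[k] b) (c ⊗ₜ[k] d) = μ a c ⊗ₜ[k] μ b d := by
  simp [mulT2, tensorTensorTensorComm_tmul]

lemma map_mulT2 (μ : A →ₗ[k] A →ₗ[k] A) (α : A →ₗ[k] A) (X Y : A ⊗[k] A) :
    TensorProduct.map α α (mulT2 μ X Y) = mulT2 (μ.compr₂ α) X Y := by
  induction X using TensorProduct.induction_on with
  | zero => simp [mulT2]
  | tmul a b =>
    induction Y using TensorProduct.induction_on with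
    | zero => simp [mulT2]
    | tmul c d => simp [mulT2_tmul]
    | add Y₁ Y₂ ih1 ih2 =>
      have e1 : mulT2 μ (a ⊗ₜ[k] b) (Y₁ + Y₂)
          = mulT2 μ (a ⊗ₜ[k] b) Y₁ + mulT2 μ (a ⊗ₜ[k] b) Y₂ := by
        simp [mulT2, tmul_add]
      have e2 : mulT2 (μ.compr₂ α) (a ⊗ₜ[k] b) (Y₁ + Y₂)
          = mulT2 (μ.compr₂ α) (a ⊗ₜ[k] b) Y₁ + mulT2 (μ.compr₂ α) (a ⊗ₜ[k] b) Y₂ := by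
        simp [mulT2, tmul_add]
      rw [e1, e2, map_add, ih1, ih2]
  | add X₁ X₂ ih1 ih2 =>
    have e1 : mulT2 μ (X₁ + X₂) Y = mulT2 μ X₁ Y + mulT2 μ X₂ Y := by
      simp [mulT2, add_tmul]
    have e2 : mulT2 (μ.compr₂ α) (X₁ + X₂) Y
        = mulT2 (μ.compr₂ α) X₁ Y + mulT2 (μ.compr₂ α) X₂ Y := by
      simp [mulT2, add_tmul]
    rw [e1, e2, map_add, ih1, ih2]

/-- If `(A, μ, Δ)` is a bialgebra and `α` a bialgebra morphism, then
`μ_α = α ∘ μ` and `Δ_α = Δ ∘ α` satisfy the Hom-bialgebra compatibility condition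
`Δ_α ∘ μ_α = (μ_α ⊗ μ_α) ∘ (Id ⊗ τ ⊗ Id) ∘ (Δ_α ⊗ Δ_α)`. -/
theorem twisted_hom_bialgebra_compatibility
    (μ : A →ₗ[k] A →ₗ[k] A) (Δ : A →ₗ[k] A ⊗[k] A)
    (hassoc : ∀ x y z : A, μ (μ x y) z = μ x (μ y z))
    (hcoassoc : (TensorProduct.assoc k A A A).toLinearMap ∘ₗ
        TensorProduct.map Δ LinearMap.id ∘ₗ Δ = TensorProduct.map LinearMap.id Δ ∘ₗ Δ)
    -- bialgebra compatibility Δ(xy) = Δ(x)Δ(y):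
    (hcompat : ∀ x y : A, Δ (μ x y) = mulT2 μ (Δ x) (Δ y))
    (α : A →ₗ[k] A)
    (hαμ : ∀ x y : A, α (μ x y) = μ (α x) (α y))
    (hαΔ : Δ ∘ₗ α = TensorProduct.map α α ∘ₗ Δ) :
    ∀ x y : A, (Δ ∘ₗ α) (α (μ x y))
      = mulT2 (μ.compr₂ α) ((Δ ∘ₗ α) x) ((Δ ∘ₗ α) y) := by
  intro x y
  have hΔα : ∀ z : A, Δ (α z) = TensorProduct.map α α (Δ z) := fun z =>
    congrFun (congrArg DFunLike.coe hαΔ) z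
  simp only [LinearMap.comp_apply]
  rw [hαμ, hΔα, hcompat, map_mulT2]
end

section
/- Let (A, μ, Δ, α, c) be a Hom-bialgebra with weak unit c, and let R = Σ sᵢ ⊗ tᵢ ∈ A ⊗ A satisfy (α ⊗ α)(R) = R (α-invariance). If R satisfies the axioms (Δ ⊗ α)(R) = R₁₃R₂₃, (α ⊗ Δ)(R) = R₁₃R₁₂, and ((τ∘Δ)(x))R = RΔ(x) for all x, then the two quantum Hom-Yang-Baxter expressions coincide: (R₁₂ R₁₃) R₂₃ = R₁₂ (R₁₃ R₂₃) and R₂₃ (R₁₃ R₁₂) = (R₂₃ R₁₃) R₁₂ in A ⊗ A ⊗ A. -/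
open TensorProduct

variable {k : Type*} [CommRing k] {A : Type*} [AddCommGroup A] [Module k A]

/-- Componentwise product on `(A ⊗ A) ⊗ A` induced by `μ`. -/
noncomputable def mulT3 (μ : A →ₗ[k] A →ₗ[k] A) (X Y : (A ⊗[k] A) ⊗[k] A) :
    (A ⊗[k] A) ⊗[k] A :=
  ((TensorProduct.map
      ((TensorProduct.map (TensorProduct.lift μ) (TensorProduct.lift μ)) ∘ₗ
        (TensorProduct.tensorTensorTensorComm k A A A A).toLinearMap)
      (TensorProduct.lift μ)) ∘ₗ
    (TensorProduct.tensorTensorTensorComm k (A ⊗[k] A) A (A ⊗[k] A) A).toLinearMap)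
    (X ⊗ₜ[k] Y)

/-- `R₁₂ = R ⊗ c`. -/
noncomputable def R12e (c : A) (R : A ⊗[k] A) : (A ⊗[k] A) ⊗[k] A := R ⊗ₜ[k] c

/-- `R₂₃ = c ⊗ R`. -/
noncomputable def R23e (c : A) (R : A ⊗[k] A) : (A ⊗[k] A) ⊗[k] A :=
  (TensorProduct.assoc k A A A).symm (c ⊗ₜ[k] R)

/-- `R₁₃ = (τ ⊗ Id)(R₂₃)`. -/
noncomputable def R13e (c : A) (R : A ⊗[k] A) : (A ⊗[k] A) ⊗[k] A :=
  TensorProduct.map (TensorProduct.comm k A A).toLinearMap LinearMap.id (R23e c R)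


section Aux

variable (μ : A →ₗ[k] A →ₗ[k] A) (c : A)

lemma mulT3_tmul (a b e x y z : A) :
    mulT3 μ ((a ⊗ₜ[k] b) ⊗ₜ[k] e) ((x ⊗ₜ[k] y) ⊗ₜ[k] z)
      = (μ a x ⊗ₜ[k] μ b y) ⊗ₜ[k] μ e z := by
  simp [mulT3]

lemma mulT3_add_left (X X' Y : (A ⊗[k] A) ⊗[k] A) :
    mulT3 μ (X + X') Y = mulT3 μ X Y + mulT3 μ X' Y := by
  simp [mulT3, add_tmul]

lemma mulT3_add_right (X Y Y' : (A ⊗[k] A) ⊗[k] A) :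
    mulT3 μ X (Y + Y') = mulT3 μ X Y + mulT3 μ X Y' := by
  simp [mulT3, tmul_add]

lemma mulT3_zero_left (Y : (A ⊗[k] A) ⊗[k] A) : mulT3 μ 0 Y = 0 := by
  simp [mulT3, zero_tmul]

lemma mulT3_zero_right (X : (A ⊗[k] A) ⊗[k] A) : mulT3 μ X 0 = 0 := by
  simp [mulT3, tmul_zero]

lemma R12e_tmul (x y : A) : R12e c (x ⊗ₜ[k] y) = (x ⊗ₜ[k] y) ⊗ₜ[k] c := rfl

lemma R12e_add (X Y : A ⊗[k] A) : R12e c (X + Y) = R12e c X + R12e c Y := by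
  simp [R12e, add_tmul]

lemma R12e_zero : R12e c (0 : A ⊗[k] A) = 0 := by simp [R12e, zero_tmul]

lemma R23e_tmul (x y : A) : R23e c (x ⊗ₜ[k] y) = (c ⊗ₜ[k] x) ⊗ₜ[k] y := by
  simp [R23e]

lemma R23e_add (X Y : A ⊗[k] A) : R23e c (X + Y) = R23e c X + R23e c Y := by
  simp [R23e, tmul_add]

lemma R23e_zero : R23e c (0 : A ⊗[k] A) = 0 := by simp [R23e]

lemma R13e_tmul (x y : A) : R13e c (x ⊗ₜ[k] y) = (x ⊗ₜ[k] c) ⊗ₜ[k] y := by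
  simp [R13e, R23e]

lemma R13e_add (X Y : A ⊗[k] A) : R13e c (X + Y) = R13e c X + R13e c Y := by
  simp [R13e, R23e_add]

lemma R13e_zero : R13e c (0 : A ⊗[k] A) = 0 := by simp [R13e, R23e_zero]

variable (α : A →ₗ[k] A)
variable (hαμ : ∀ x y : A, α (μ x y) = μ (α x) (α y))
variable (hcl : ∀ x : A, μ c x = α x) (hcr : ∀ x : A, μ x c = α x)

include hαμ hcl hcr in
lemma qhybe_key1 (X Y Z : A ⊗[k] A) :
    mulT3 μ (mulT3 μ (R12e c X) (R13e c Y)) (R23e c (TensorProduct.map α α Z))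
      = mulT3 μ (R12e c (TensorProduct.map α α X)) (mulT3 μ (R13e c Y) (R23e c Z)) := by
  induction X using TensorProduct.induction_on with
  | zero => simp [R12e_zero, mulT3_zero_left]
  | add X X' hX hX' =>
      simp only [map_add, R12e_add, mulT3_add_left, hX, hX']
  | tmul x x' =>
    induction Y using TensorProduct.induction_on with
    | zero => simp [R13e_zero, mulT3_zero_right, mulT3_zero_left]
    | add Y Y' hY hY' =>
        simp only [R13e_add, mulT3_add_right, mulT3_add_left, hY, hY']
    | tmul y y' =>
      induction Z using TensorProduct.induction_on with
      | zero => simp [R23e_zero, mulT3_zero_right]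
      | add Z Z' hZ hZ' =>
          simp only [map_add, R23e_add, mulT3_add_right, hZ, hZ']
      | tmul z z' =>
          simp only [map_tmul, R12e_tmul, R13e_tmul, R23e_tmul, mulT3_tmul,
            hcl, hcr, ← hαμ]

include hαμ hcl hcr in
lemma qhybe_key2 (X Y Z : A ⊗[k] A) :
    mulT3 μ (R23e c (TensorProduct.map α α Z)) (mulT3 μ (R13e c Y) (R12e c X))
      = mulT3 μ (mulT3 μ (R23e c Z) (R13e c Y)) (R12e c (TensorProduct.map α α X)) := by
  induction X using TensorProduct.induction_on with
  | zero => simp [R12e_zero, mulT3_zero_right]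
  | add X X' hX hX' =>
      simp only [map_add, R12e_add, mulT3_add_right, hX, hX']
  | tmul x x' =>
    induction Y using TensorProduct.induction_on with
    | zero => simp [R13e_zero, mulT3_zero_right, mulT3_zero_left]
    | add Y Y' hY hY' =>
        simp only [R13e_add, mulT3_add_right, mulT3_add_left, hY, hY']
    | tmul y y' =>
      induction Z using TensorProduct.induction_on with
      | zero => simp [R23e_zero, mulT3_zero_left]
      | add Z Z' hZ hZ' =>
          simp only [map_add, R23e_add, mulT3_add_left, hZ, hZ']
      | tmul z z' =>
          simp only [map_tmul, R12e_tmul, R13e_tmul, R23e_tmul, mulT3_tmul,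
            hcl, hcr, ← hαμ]

end Aux

/-- If `R` is `α`-invariant, then the two quantum Hom-Yang-Baxter
expressions coincide: `(R₁₂ R₁₃) R₂₃ = R₁₂ (R₁₃ R₂₃)` and
`R₂₃ (R₁₃ R₁₂) = (R₂₃ R₁₃) R₁₂`. -/
theorem qhybe_expressions_coincide_of_alpha_invariant
    (μ : A →ₗ[k] A →ₗ[k] A) (Δ : A →ₗ[k] A ⊗[k] A) (α : A →ₗ[k] A) (c : A) (R : A ⊗[k] A)
    (hαμ : ∀ x y : A, α (μ x y) = μ (α x) (α y))
    (hassoc : ∀ x y z : A, μ (μ x y) (α z) = μ (α x) (μ y z))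
    (hαΔ : Δ ∘ₗ α = TensorProduct.map α α ∘ₗ Δ)
    (hcoassoc : (TensorProduct.assoc k A A A).toLinearMap ∘ₗ TensorProduct.map Δ α ∘ₗ Δ
      = TensorProduct.map α Δ ∘ₗ Δ)
    (hcompat : ∀ x y : A, Δ (μ x y) = mulT2 μ (Δ x) (Δ y))
    (hcl : ∀ x : A, μ c x = α x) (hcr : ∀ x : A, μ x c = α x)
    -- α-invariance of R:
    (hinv : TensorProduct.map α α R = R)
    (hR1 : TensorProduct.map Δ α R = mulT3 μ (R13e c R) (R23e c R))
    (hR2 : (TensorProduct.assoc k A A A).symm (TensorProduct.map α Δ R)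
      = mulT3 μ (R13e c R) (R12e c R))
    (hR3 : ∀ x : A, mulT2 μ ((TensorProduct.comm k A A) (Δ x)) R = mulT2 μ R (Δ x)) :
    (mulT3 μ (mulT3 μ (R12e c R) (R13e c R)) (R23e c R)
        = mulT3 μ (R12e c R) (mulT3 μ (R13e c R) (R23e c R))) ∧
    (mulT3 μ (R23e c R) (mulT3 μ (R13e c R) (R12e c R))
        = mulT3 μ (mulT3 μ (R23e c R) (R13e c R)) (R12e c R)) := by
  constructor
  · have h := qhybe_key1 μ c α hαμ hcl hcr R R R
    rwa [hinv] at h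
  · have h := qhybe_key2 μ c α hαμ hcl hcr R R R
    rwa [hinv] at h
end

section
/- Let (A, μ, Δ, α, c, R) be a Hom-bialgebra with weak unit c and R ∈ A ⊗ A satisfying the first two quasi-triangularity axioms (Δ ⊗ α)(R) = R₁₃R₂₃ and (α ⊗ Δ)(R) = R₁₃R₁₂ (no surjectivity of α assumed). Then Rᵅ = (α ⊗ α)(R) also satisfies these two axioms: (Δ ⊗ α)(Rᵅ) = Rᵅ₁₃Rᵅ₂₃ and (α ⊗ Δ)(Rᵅ) = Rᵅ₁₃Rᵅ₁₂. -/
open TensorProduct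

variable {k : Type*} [CommRing k] {A : Type*} [AddCommGroup A] [Module k A]

/-- If `R` satisfies the first two quasi-triangularity axioms (no
surjectivity of `α` assumed), then so does `Rᵅ = (α ⊗ α)(R)`. -/
theorem twisted_R_first_two_axioms
    (μ : A →ₗ[k] A →ₗ[k] A) (Δ : A →ₗ[k] A ⊗[k] A) (α : A →ₗ[k] A) (c : A) (R : A ⊗[k] A)
    (hαμ : ∀ x y : A, α (μ x y) = μ (α x) (α y))
    (hassoc : ∀ x y z : A, μ (μ x y) (α z) = μ (α x) (μ y z))
    (hαΔ : Δ ∘ₗ α = TensorProduct.map α α ∘ₗ Δ)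
    (hcoassoc : (TensorProduct.assoc k A A A).toLinearMap ∘ₗ TensorProduct.map Δ α ∘ₗ Δ
      = TensorProduct.map α Δ ∘ₗ Δ)
    (hcompat : ∀ x y : A, Δ (μ x y) = mulT2 μ (Δ x) (Δ y))
    (hcl : ∀ x : A, μ c x = α x) (hcr : ∀ x : A, μ x c = α x)
    (hR1 : TensorProduct.map Δ α R = mulT3 μ (R13e c R) (R23e c R))
    (hR2 : (TensorProduct.assoc k A A A).symm (TensorProduct.map α Δ R)
      = mulT3 μ (R13e c R) (R12e c R)) :
    (TensorProduct.map Δ α (TensorProduct.map α α R)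
        = mulT3 μ (R13e c (TensorProduct.map α α R)) (R23e c (TensorProduct.map α α R))) ∧
    ((TensorProduct.assoc k A A A).symm (TensorProduct.map α Δ (TensorProduct.map α α R))
        = mulT3 μ (R13e c (TensorProduct.map α α R)) (R12e c (TensorProduct.map α α R))) := by

  classical
  -- key lemma 1: the twist map (α⊗α)⊗α commutes with the product of R13 and R23
  have key1 : ∀ X Y : A ⊗[k] A,
      TensorProduct.map (TensorProduct.map α α) α (mulT3 μ (R13e c X) (R23e c Y))
        = mulT3 μ (R13e c (TensorProduct.map α α X))
            (R23e c (TensorProduct.map α α Y)) := by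
    intro X Y
    induction X using TensorProduct.induction_on with
    | zero => simp [mulT3, R13e, R23e]
    | tmul a b =>
      induction Y using TensorProduct.induction_on with
      | zero => simp [mulT3, R13e, R23e]
      | tmul u v =>
        simp [mulT3, R13e, R23e, TensorProduct.assoc_symm_tmul,
          TensorProduct.tensorTensorTensorComm_tmul, hcl, hcr, hαμ]
      | add y1 y2 h1 h2 =>
        simp only [mulT3, R13e, R23e, map_add, TensorProduct.tmul_add,
          TensorProduct.add_tmul] at h1 h2 ⊢
        rw [h1, h2]
    | add x1 x2 h1 h2 =>
      simp only [mulT3, R13e, R23e, map_add, TensorProduct.tmul_add,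
        TensorProduct.add_tmul] at h1 h2 ⊢
      rw [h1, h2]
  have key2 : ∀ X Y : A ⊗[k] A,
      TensorProduct.map (TensorProduct.map α α) α (mulT3 μ (R13e c X) (R12e c Y))
        = mulT3 μ (R13e c (TensorProduct.map α α X))
            (R12e c (TensorProduct.map α α Y)) := by
    intro X Y
    induction X using TensorProduct.induction_on with
    | zero => simp [mulT3, R13e, R23e, R12e]
    | tmul a b =>
      induction Y using TensorProduct.induction_on with
      | zero => simp [mulT3, R13e, R23e, R12e]
      | tmul u v =>
        simp [mulT3, R13e, R23e, R12e, TensorProduct.assoc_symm_tmul,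
          TensorProduct.tensorTensorTensorComm_tmul, hcl, hcr, hαμ]
      | add y1 y2 h1 h2 =>
        simp only [mulT3, R13e, R23e, R12e, map_add, TensorProduct.tmul_add,
          TensorProduct.add_tmul] at h1 h2 ⊢
        rw [h1, h2]
    | add x1 x2 h1 h2 =>
      simp only [mulT3, R13e, R23e, R12e, map_add, TensorProduct.tmul_add,
        TensorProduct.add_tmul] at h1 h2 ⊢
      rw [h1, h2]
  constructor
  · have : TensorProduct.map Δ α (TensorProduct.map α α R)
        = TensorProduct.map (TensorProduct.map α α) α (TensorProduct.map Δ α R) := by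
      rw [← LinearMap.comp_apply, ← LinearMap.comp_apply,
        ← TensorProduct.map_comp, ← TensorProduct.map_comp, hαΔ]
    rw [this, hR1, key1]
  · have hnat : ∀ t : A ⊗[k] (A ⊗[k] A),
        (TensorProduct.assoc k A A A).symm (TensorProduct.map α (TensorProduct.map α α) t)
          = TensorProduct.map (TensorProduct.map α α) α
              ((TensorProduct.assoc k A A A).symm t) := by
      intro t
      induction t using TensorProduct.induction_on with
      | zero => simp
      | tmul a y =>
        induction y using TensorProduct.induction_on with
        | zero => simp
        | tmul u v => simp [TensorProduct.assoc_symm_tmul]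
        | add y1 y2 h1 h2 =>
          simp only [map_add, TensorProduct.tmul_add] at h1 h2 ⊢
          rw [h1, h2]
      | add t1 t2 h1 h2 =>
        simp only [map_add] at h1 h2 ⊢
        rw [h1, h2]
    have : TensorProduct.map α Δ (TensorProduct.map α α R)
        = TensorProduct.map α (TensorProduct.map α α) (TensorProduct.map α Δ R) := by
      rw [← LinearMap.comp_apply, ← LinearMap.comp_apply,
        ← TensorProduct.map_comp, ← TensorProduct.map_comp, hαΔ]
    rw [this, hnat, hR2, key2]
end

section
/- Let (A, μ_A, α_A) be a Hom-associative algebra with weak unit, (M, α_M) an A-module, and (A, μ, Δ, α_A, c, R) a quasi-triangular Hom-bialgebra with R = Σ sᵢ ⊗ tᵢ satisfying (α_A ⊗ α_A)(R) = R (α-invariance). Then the operator B : M ⊗ M → M ⊗ M defined by B(v ⊗ w) = Σ tᵢ·w ⊗ sᵢ·v is a solution of the Hom-Yang-Baxter equation for (M, α_M): B commutes with α_M ⊗ α_M and (α_M ⊗ B)(B ⊗ α_M)(α_M ⊗ B) = (B ⊗ α_M)(α_M ⊗ B)(B ⊗ α_M) on M ⊗ M ⊗ M. -/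
open TensorProduct

variable {k : Type*} [CommRing k] {A : Type*} [AddCommGroup A] [Module k A]

variable {M : Type*} [AddCommGroup M] [Module k M]

/-- The action of `R ∈ A ⊗ A` on `M ⊗ M` followed by the twist:
`B(v ⊗ w) = Σ tᵢ·w ⊗ sᵢ·v` for `R = Σ sᵢ ⊗ tᵢ`. -/
noncomputable def Bop (lam : A →ₗ[k] M →ₗ[k] M) (R : A ⊗[k] A) :
    M ⊗[k] M →ₗ[k] M ⊗[k] M :=
  (TensorProduct.comm k M M).toLinearMap ∘ₗ
    (TensorProduct.homTensorHomMap (RingHom.id k) M M M M) (TensorProduct.map lam lam R)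

/-- If `(A, μ, Δ, α, c, R)` is a quasi-triangular Hom-bialgebra with
`α`-invariant `R` and `(M, α_M)` is an `A`-module, then `B = τ ∘ R` is a solution of the
Hom-Yang-Baxter equation for `(M, α_M)`. -/
theorem module_gives_hybe_solution
    (μ : A →ₗ[k] A →ₗ[k] A) (Δ : A →ₗ[k] A ⊗[k] A) (α : A →ₗ[k] A) (c : A) (R : A ⊗[k] A)
    (hαμ : ∀ x y : A, α (μ x y) = μ (α x) (α y))
    (hassoc : ∀ x y z : A, μ (μ x y) (α z) = μ (α x) (μ y z))
    (hαΔ : Δ ∘ₗ α = TensorProduct.map α α ∘ₗ Δ)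
    (hcoassoc : (TensorProduct.assoc k A A A).toLinearMap ∘ₗ TensorProduct.map Δ α ∘ₗ Δ
      = TensorProduct.map α Δ ∘ₗ Δ)
    (hcompat : ∀ x y : A, Δ (μ x y) = mulT2 μ (Δ x) (Δ y))
    (hcl : ∀ x : A, μ c x = α x) (hcr : ∀ x : A, μ x c = α x)
    (hR1 : TensorProduct.map Δ α R = mulT3 μ (R13e c R) (R23e c R))
    (hR2 : (TensorProduct.assoc k A A A).symm (TensorProduct.map α Δ R)
      = mulT3 μ (R13e c R) (R12e c R))
    (hR3 : ∀ x : A, mulT2 μ ((TensorProduct.comm k A A) (Δ x)) R = mulT2 μ R (Δ x))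
    -- α-invariance of R:
    (hinv : TensorProduct.map α α R = R)
    -- (M, α_M) is an A-module with action lam:
    (lam : A →ₗ[k] M →ₗ[k] M) (αM : M →ₗ[k] M)
    (hmod1 : ∀ a b : A, ∀ x : M, lam (μ a b) (αM x) = lam (α a) (lam b x))
    (hmod2 : ∀ a : A, ∀ x : M, αM (lam a x) = lam (α a) (αM x)) :
    -- B commutes with α_M ⊗ α_M:
    (TensorProduct.map αM αM ∘ₗ Bop lam R = Bop lam R ∘ₗ TensorProduct.map αM αM) ∧
    -- the Hom-Yang-Baxter equation (α ⊗ B)(B ⊗ α)(α ⊗ B) = (B ⊗ α)(α ⊗ B)(B ⊗ α)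
    -- as operators on (M ⊗ M) ⊗ M:
    (((TensorProduct.assoc k M M M).symm.toLinearMap ∘ₗ
          TensorProduct.map αM (Bop lam R) ∘ₗ (TensorProduct.assoc k M M M).toLinearMap) ∘ₗ
        TensorProduct.map (Bop lam R) αM ∘ₗ
        ((TensorProduct.assoc k M M M).symm.toLinearMap ∘ₗ
          TensorProduct.map αM (Bop lam R) ∘ₗ (TensorProduct.assoc k M M M).toLinearMap)
      = TensorProduct.map (Bop lam R) αM ∘ₗ
        ((TensorProduct.assoc k M M M).symm.toLinearMap ∘ₗ
          TensorProduct.map αM (Bop lam R) ∘ₗ (TensorProduct.assoc k M M M).toLinearMap) ∘ₗ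
        TensorProduct.map (Bop lam R) αM) := by
  classical
  obtain ⟨S, hS⟩ := TensorProduct.exists_finset R
  -- basic pure-tensor computation lemmas
  have hinv2 : TensorProduct.map α α (TensorProduct.map α α R) = R := by rw [hinv, hinv]
  have Bop_tmul : ∀ (s t : A) (x y : M),
      Bop lam (s ⊗ₜ[k] t) (x ⊗ₜ[k] y) = lam t y ⊗ₜ[k] lam s x := by
    intro s t x y
    simp [Bop, homTensorHomMap_apply]
  -- three expansions of Bop lam R, with 0, 1, 2 extra α's
  have B0 : ∀ x y : M, Bop lam R (x ⊗ₜ[k] y) = ∑ p ∈ S, lam p.2 y ⊗ₜ[k] lam p.1 x := by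
    intro x y
    conv_lhs => rw [hS]
    simp only [Bop, map_sum, LinearMap.sum_apply, LinearMap.coe_comp, Function.comp_apply,
      LinearEquiv.coe_coe, map_tmul, homTensorHomMap_apply, comm_tmul]
  have B1 : ∀ x y : M,
      Bop lam R (x ⊗ₜ[k] y) = ∑ p ∈ S, lam (α p.2) y ⊗ₜ[k] lam (α p.1) x := by
    intro x y
    conv_lhs => rw [← hinv, hS]
    simp only [Bop, map_sum, LinearMap.sum_apply, LinearMap.coe_comp, Function.comp_apply,
      LinearEquiv.coe_coe, map_tmul, homTensorHomMap_apply, comm_tmul]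
  have B2 : ∀ x y : M,
      Bop lam R (x ⊗ₜ[k] y)
        = ∑ p ∈ S, lam (α (α p.2)) y ⊗ₜ[k] lam (α (α p.1)) x := by
    intro x y
    conv_lhs => rw [← hinv2, hS]
    simp only [Bop, map_sum, LinearMap.sum_apply, LinearMap.coe_comp, Function.comp_apply,
      LinearEquiv.coe_coe, map_tmul, homTensorHomMap_apply, comm_tmul]
  constructor
  · -- part 1
    apply TensorProduct.ext'
    intro x y
    simp only [LinearMap.coe_comp, Function.comp_apply, map_tmul]
    rw [B0, B1, map_sum]
    refine Finset.sum_congr rfl fun p _ => ?_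
    rw [map_tmul, hmod2, hmod2]
  · -- part 2 : the Hom-Yang-Baxter equation
    -- ALGEBRA-LEVEL PREPARATIONS
    set bigmap2 : (A ⊗[k] A) ⊗[k] (A ⊗[k] A) →ₗ[k] A ⊗[k] A :=
      (TensorProduct.map (TensorProduct.lift μ) (TensorProduct.lift μ)) ∘ₗ
        (TensorProduct.tensorTensorTensorComm k A A A A).toLinearMap with hbig
    have hmulT2 : ∀ X Y : A ⊗[k] A, mulT2 μ X Y = bigmap2 (X ⊗ₜ[k] Y) := by
      intro X Y; rw [hbig]; rfl
    have mulT2_tmul : ∀ a b a' b' : A,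
        mulT2 μ (a ⊗ₜ[k] b) (a' ⊗ₜ[k] b') = μ a a' ⊗ₜ[k] μ b b' := by
      intro a b a' b'
      simp [mulT2, tensorTensorTensorComm_tmul]
    have mulT2_zero_left : ∀ Y : A ⊗[k] A, mulT2 μ 0 Y = 0 := by
      intro Y; simp [hmulT2, zero_tmul]
    have mulT2_zero_right : ∀ X : A ⊗[k] A, mulT2 μ X 0 = 0 := by
      intro X; simp [hmulT2, tmul_zero]
    have mulT2_add_left : ∀ X X' Y : A ⊗[k] A,
        mulT2 μ (X + X') Y = mulT2 μ X Y + mulT2 μ X' Y := by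
      intro X X' Y; simp [hmulT2, add_tmul]
    have mulT2_add_right : ∀ X Y Y' : A ⊗[k] A,
        mulT2 μ X (Y + Y') = mulT2 μ X Y + mulT2 μ X Y' := by
      intro X Y Y'; simp [hmulT2, tmul_add]
    have mulT2_sum_right : ∀ (X : A ⊗[k] A) (f : A × A → A ⊗[k] A),
        mulT2 μ X (∑ p ∈ S, f p) = ∑ p ∈ S, mulT2 μ X (f p) := by
      intro X f; simp [hmulT2, tmul_sum]
    have mulT2_sum_left : ∀ (Y : A ⊗[k] A) (f : A × A → A ⊗[k] A),
        mulT2 μ (∑ p ∈ S, f p) Y = ∑ p ∈ S, mulT2 μ (f p) Y := by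
      intro Y f; simp [hmulT2, sum_tmul]
    have comm_comm : ∀ z : A ⊗[k] A,
        (TensorProduct.comm k A A) ((TensorProduct.comm k A A) z) = z := by
      intro z
      induction z using TensorProduct.induction_on with
      | zero => simp
      | tmul a b => simp
      | add z1 z2 h1 h2 => simp [map_add, h1, h2]
    have comm_mulT2 : ∀ X Y : A ⊗[k] A,
        (TensorProduct.comm k A A) (mulT2 μ X Y)
          = mulT2 μ ((TensorProduct.comm k A A) X) ((TensorProduct.comm k A A) Y) := by
      intro X Y
      induction X using TensorProduct.induction_on with
      | zero => simp [mulT2_zero_left]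
      | tmul a b =>
        induction Y using TensorProduct.induction_on with
        | zero => simp [mulT2_zero_right]
        | tmul a' b' => simp [mulT2_tmul, comm_tmul]
        | add Y1 Y2 g1 g2 => simp [mulT2_add_right, map_add, g1, g2]
      | add X1 X2 h1 h2 => simp [mulT2_add_left, map_add, h1, h2]
    have hR3' : ∀ x : A,
        mulT2 μ (Δ x) ((TensorProduct.comm k A A) R)
          = mulT2 μ ((TensorProduct.comm k A A) R) ((TensorProduct.comm k A A) (Δ x)) := by
      intro x
      have h := congrArg (TensorProduct.comm k A A) (hR3 x)
      rw [comm_mulT2, comm_mulT2, comm_comm] at h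
      exact h
    have hcommR0 : (TensorProduct.comm k A A) R = ∑ p ∈ S, p.2 ⊗ₜ[k] p.1 := by
      conv_lhs => rw [hS]
      simp [map_sum]
    have hcommR1 : (TensorProduct.comm k A A) R = ∑ p ∈ S, α p.2 ⊗ₜ[k] α p.1 := by
      conv_lhs => rw [← hinv, hS]
      simp [map_sum]
    -- the two transport maps KR and JR
    set KR : (A ⊗[k] A) ⊗[k] A →ₗ[k] (A ⊗[k] A) ⊗[k] A :=
      (TensorProduct.map
          (bigmap2 ∘ₗ
            (TensorProduct.mk k (A ⊗[k] A) (A ⊗[k] A)).flip ((TensorProduct.comm k A A) R))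
          α) ∘ₗ
        ((TensorProduct.comm k A (A ⊗[k] A)).toLinearMap ∘ₗ
          (TensorProduct.assoc k A A A).toLinearMap) with hKR
    set JR : (A ⊗[k] A) ⊗[k] A →ₗ[k] (A ⊗[k] A) ⊗[k] A :=
      (TensorProduct.map
          (bigmap2 ∘ₗ
            (TensorProduct.mk k (A ⊗[k] A) (A ⊗[k] A)) ((TensorProduct.comm k A A) R) ∘ₗ
            (TensorProduct.comm k A A).toLinearMap)
          α) ∘ₗ
        ((TensorProduct.comm k A (A ⊗[k] A)).toLinearMap ∘ₗ
          (TensorProduct.assoc k A A A).toLinearMap) with hJR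
    have KR_tmul : ∀ a b e : A,
        KR ((a ⊗ₜ[k] b) ⊗ₜ[k] e)
          = mulT2 μ (b ⊗ₜ[k] e) ((TensorProduct.comm k A A) R) ⊗ₜ[k] α a := by
      intro a b e
      rw [hKR]
      simp only [LinearMap.coe_comp, Function.comp_apply, LinearEquiv.coe_coe, assoc_tmul,
        comm_tmul, map_tmul, LinearMap.flip_apply, mk_apply]
      rw [hmulT2]
    have JR_tmul : ∀ a b e : A,
        JR ((a ⊗ₜ[k] b) ⊗ₜ[k] e)
          = mulT2 μ ((TensorProduct.comm k A A) R)
              ((TensorProduct.comm k A A) (b ⊗ₜ[k] e)) ⊗ₜ[k] α a := by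
      intro a b e
      rw [hJR]
      simp only [LinearMap.coe_comp, Function.comp_apply, LinearEquiv.coe_coe, assoc_tmul,
        comm_tmul, map_tmul, mk_apply]
      rw [hmulT2]
    have KR_assoc : ∀ (a : A) (z : A ⊗[k] A),
        KR ((TensorProduct.assoc k A A A).symm (a ⊗ₜ[k] z))
          = mulT2 μ z ((TensorProduct.comm k A A) R) ⊗ₜ[k] α a := by
      intro a z
      induction z using TensorProduct.induction_on with
      | zero => simp [tmul_zero, mulT2_zero_left, zero_tmul]
      | tmul b e => rw [assoc_symm_tmul, KR_tmul]
      | add z1 z2 h1 h2 =>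
        rw [tmul_add, map_add, map_add, h1, h2, mulT2_add_left, add_tmul]
    have JR_assoc : ∀ (a : A) (z : A ⊗[k] A),
        JR ((TensorProduct.assoc k A A A).symm (a ⊗ₜ[k] z))
          = mulT2 μ ((TensorProduct.comm k A A) R)
              ((TensorProduct.comm k A A) z) ⊗ₜ[k] α a := by
      intro a z
      induction z using TensorProduct.induction_on with
      | zero => simp [tmul_zero, mulT2_zero_right, zero_tmul]
      | tmul b e => rw [assoc_symm_tmul, JR_tmul]
      | add z1 z2 h1 h2 =>
        rw [tmul_add, map_add, map_add, h1, h2, map_add, mulT2_add_right, add_tmul]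
    -- expansion of the product R₁₃ R₁₂
    have hR13 : R13e c R = ∑ p ∈ S, (p.1 ⊗ₜ[k] c) ⊗ₜ[k] p.2 := by
      rw [R13e, R23e]
      conv_lhs => rw [hS]
      simp only [tmul_sum, map_sum, assoc_symm_tmul, map_tmul, comm_tmul, LinearMap.id_coe,
        id_eq, LinearEquiv.coe_coe]
    have hR12 : R12e c R = ∑ p ∈ S, (p.1 ⊗ₜ[k] p.2) ⊗ₜ[k] c := by
      rw [R12e]
      conv_lhs => rw [hS]
      rw [sum_tmul]
    have mulT3_tmul : ∀ a b e a' b' e' : A,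
        mulT3 μ ((a ⊗ₜ[k] b) ⊗ₜ[k] e) ((a' ⊗ₜ[k] b') ⊗ₜ[k] e')
          = (μ a a' ⊗ₜ[k] μ b b') ⊗ₜ[k] μ e e' := by
      intro a b e a' b' e'
      simp [mulT3, tensorTensorTensorComm_tmul]
    have mulT3_sum : ∀ (f g : A × A → (A ⊗[k] A) ⊗[k] A),
        mulT3 μ (∑ p ∈ S, f p) (∑ q ∈ S, g q)
          = ∑ p ∈ S, ∑ q ∈ S, mulT3 μ (f p) (g q) := by
      intro f g
      simp only [mulT3, LinearMap.coe_comp, Function.comp_apply, LinearEquiv.coe_coe,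
        sum_tmul, tmul_sum, map_sum]
      exact Finset.sum_comm
    have hD : mulT3 μ (R13e c R) (R12e c R)
        = ∑ r ∈ S, ∑ q ∈ S, (μ r.1 q.1 ⊗ₜ[k] α q.2) ⊗ₜ[k] α r.2 := by
      rw [hR13, hR12, mulT3_sum]
      refine Finset.sum_congr rfl fun r _ => Finset.sum_congr rfl fun q _ => ?_
      rw [mulT3_tmul, hcl, hcr]
    -- triple sum reindexing
    have sum_rev : ∀ F : A × A → A × A → A × A → (A ⊗[k] A) ⊗[k] A,
        (∑ p ∈ S, ∑ q ∈ S, ∑ r ∈ S, F p q r)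
          = ∑ r ∈ S, ∑ q ∈ S, ∑ p ∈ S, F p q r := by
      intro F
      calc (∑ p ∈ S, ∑ q ∈ S, ∑ r ∈ S, F p q r)
          = ∑ p ∈ S, ∑ r ∈ S, ∑ q ∈ S, F p q r :=
            Finset.sum_congr rfl fun p _ => Finset.sum_comm
        _ = ∑ r ∈ S, ∑ p ∈ S, ∑ q ∈ S, F p q r := Finset.sum_comm
        _ = ∑ r ∈ S, ∑ q ∈ S, ∑ p ∈ S, F p q r :=
            Finset.sum_congr rfl fun r _ => Finset.sum_comm
    -- THE KEY ALGEBRAIC IDENTITY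
    have keyA :
        (∑ p ∈ S, ∑ q ∈ S, ∑ r ∈ S,
          (μ (α q.2) (α p.2) ⊗ₜ[k] μ (α r.2) (α p.1)) ⊗ₜ[k] μ (α r.1) (α q.1))
        = ∑ p ∈ S, ∑ q ∈ S, ∑ r ∈ S,
          (μ r.2 (α q.2) ⊗ₜ[k] μ r.1 (α p.2)) ⊗ₜ[k] μ (α q.1) (α p.1) := by
      have s1 : KR (mulT3 μ (R13e c R) (R12e c R))
          = ∑ r ∈ S, ∑ q ∈ S, ∑ p ∈ S,
            (μ (α q.2) (α p.2) ⊗ₜ[k] μ (α r.2) (α p.1)) ⊗ₜ[k] μ (α r.1) (α q.1) := by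
        rw [hD, map_sum]
        refine Finset.sum_congr rfl fun r _ => ?_
        rw [map_sum]
        refine Finset.sum_congr rfl fun q _ => ?_
        rw [KR_tmul, hcommR1, mulT2_sum_right, sum_tmul, hαμ]
        refine Finset.sum_congr rfl fun p _ => ?_
        rw [mulT2_tmul]
      have s3 : KR ((TensorProduct.assoc k A A A).symm (TensorProduct.map α Δ R))
          = ∑ p ∈ S, mulT2 μ (Δ p.2) ((TensorProduct.comm k A A) R) ⊗ₜ[k] α (α p.1) := by
        conv_lhs => rw [hS]
        rw [map_sum, map_sum, map_sum]
        refine Finset.sum_congr rfl fun p _ => ?_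
        rw [map_tmul, KR_assoc]
      have s5 : JR ((TensorProduct.assoc k A A A).symm (TensorProduct.map α Δ R))
          = ∑ p ∈ S, mulT2 μ ((TensorProduct.comm k A A) R)
              ((TensorProduct.comm k A A) (Δ p.2)) ⊗ₜ[k] α (α p.1) := by
        conv_lhs => rw [hS]
        rw [map_sum, map_sum, map_sum]
        refine Finset.sum_congr rfl fun p _ => ?_
        rw [map_tmul, JR_assoc]
      have s7 : JR (mulT3 μ (R13e c R) (R12e c R))
          = ∑ q ∈ S, ∑ p ∈ S, ∑ r ∈ S,
            (μ r.2 (α q.2) ⊗ₜ[k] μ r.1 (α p.2)) ⊗ₜ[k] μ (α q.1) (α p.1) := by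
        rw [hD, map_sum]
        refine Finset.sum_congr rfl fun q _ => ?_
        rw [map_sum]
        refine Finset.sum_congr rfl fun p _ => ?_
        rw [JR_tmul, comm_tmul, hcommR0, mulT2_sum_left, sum_tmul, hαμ]
        refine Finset.sum_congr rfl fun r _ => ?_
        rw [mulT2_tmul]
      calc (∑ p ∈ S, ∑ q ∈ S, ∑ r ∈ S,
              (μ (α q.2) (α p.2) ⊗ₜ[k] μ (α r.2) (α p.1)) ⊗ₜ[k] μ (α r.1) (α q.1))
          = ∑ r ∈ S, ∑ q ∈ S, ∑ p ∈ S,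
              (μ (α q.2) (α p.2) ⊗ₜ[k] μ (α r.2) (α p.1)) ⊗ₜ[k] μ (α r.1) (α q.1) :=
            sum_rev _
        _ = KR (mulT3 μ (R13e c R) (R12e c R)) := s1.symm
        _ = KR ((TensorProduct.assoc k A A A).symm (TensorProduct.map α Δ R)) := by
            rw [hR2]
        _ = ∑ p ∈ S, mulT2 μ (Δ p.2) ((TensorProduct.comm k A A) R) ⊗ₜ[k] α (α p.1) := s3
        _ = ∑ p ∈ S, mulT2 μ ((TensorProduct.comm k A A) R)
              ((TensorProduct.comm k A A) (Δ p.2)) ⊗ₜ[k] α (α p.1) :=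
            Finset.sum_congr rfl fun p _ => by rw [hR3']
        _ = JR ((TensorProduct.assoc k A A A).symm (TensorProduct.map α Δ R)) := s5.symm
        _ = JR (mulT3 μ (R13e c R) (R12e c R)) := by rw [hR2]
        _ = ∑ q ∈ S, ∑ p ∈ S, ∑ r ∈ S,
              (μ r.2 (α q.2) ⊗ₜ[k] μ r.1 (α p.2)) ⊗ₜ[k] μ (α q.1) (α p.1) := s7
        _ = ∑ p ∈ S, ∑ q ∈ S, ∑ r ∈ S,
              (μ r.2 (α q.2) ⊗ₜ[k] μ r.1 (α p.2)) ⊗ₜ[k] μ (α q.1) (α p.1) :=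
            Finset.sum_comm
    -- MODULE-LEVEL COMPUTATION
    refine TensorProduct.ext_threefold fun u v w => ?_
    simp only [LinearMap.coe_comp, Function.comp_apply, LinearEquiv.coe_coe]
    conv_lhs =>
      rw [assoc_tmul, map_tmul, B0, tmul_sum, map_sum]
      simp only [assoc_symm_tmul]
      rw [map_sum]
      simp only [map_tmul, B1, sum_tmul]
      simp only [map_sum, assoc_tmul, map_tmul, B2, tmul_sum, assoc_symm_tmul]
    conv_rhs =>
      rw [map_tmul, B0, sum_tmul, map_sum]
      simp only [assoc_tmul]
      rw [map_sum]
      simp only [map_tmul, B1, tmul_sum]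
      simp only [map_sum, assoc_symm_tmul]
      simp only [map_sum, map_tmul, B1, sum_tmul]
    have keyM := congrArg
      (TensorProduct.map
        (TensorProduct.map (lam.flip (αM (αM w))) (lam.flip (αM (αM v))))
        (lam.flip (αM (αM u)))) keyA
    simp only [map_sum, map_tmul, LinearMap.flip_apply] at keyM
    simp only [hmod1, hmod2] at keyM ⊢
    exact keyM
end

section
/- Let V be a free module of rank 2 over a commutative ring k with basis {v₀, v₁}, let q be an invertible element of k with square root q^{1/2}, and let γ be an invertible element of k. Define α : V → V by α(vᵢ) = γ^{-i} vᵢ and B_α : V ⊗ V → V ⊗ V by the matrix (with respect to the basis {v₀⊗v₀, v₀⊗v₁, v₁⊗v₀, v₁⊗v₁}): B_α(v₀⊗v₀) = q^{1/2} v₀⊗v₀, B_α(v₀⊗v₁) = γ^{-1} q^{-1/2} v₁⊗v₀, B_α(v₁⊗v₀) = γ^{-1} q^{-1/2} v₀⊗v₁ + γ^{-1} q^{-1/2}(q - q^{-1}) v₁⊗v₀, B_α(v₁⊗v₁) = γ^{-2} q^{1/2} v₁⊗v₁. Then B_α commutes with α ⊗ α and satisfies the Hom-Yang-Baxter equation (α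 ⊗ B_α)(B_α ⊗ α)(α ⊗ B_α) = (B_α ⊗ α)(α ⊗ B_α)(B_α ⊗ α) on V ⊗ V ⊗ V. -/
open TensorProduct

/-- On a free module `V` of rank 2 with basis `{v₀, v₁}`, with `q` invertible
with square root `q^{1/2} = s` and `γ` invertible, the maps `α(vᵢ) = γ^{-i} vᵢ` and `B_α`
given by the matrix
`B_α(v₀⊗v₀) = q^{1/2} v₀⊗v₀`, `B_α(v₀⊗v₁) = γ⁻¹ q^{-1/2} v₁⊗v₀`,
`B_α(v₁⊗v₀) = γ⁻¹ q^{-1/2} v₀⊗v₁ + γ⁻¹ q^{-1/2}(q - q⁻¹) v₁⊗v₀`,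
`B_α(v₁⊗v₁) = γ⁻² q^{1/2} v₁⊗v₁`
commute and satisfy the Hom-Yang-Baxter equation on `V ⊗ V ⊗ V`. -/
theorem Uhsl2_module_hybe_solution
    {k : Type*} [CommRing k] {V : Type*} [AddCommGroup V] [Module k V]
    (b : Module.Basis (Fin 2) k V)
    (q s γ : kˣ) (hs : (s : k) * (s : k) = (q : k))
    (α : V →ₗ[k] V)
    (hα0 : α (b 0) = b 0)
    (hα1 : α (b 1) = (γ⁻¹ : kˣ) • b 1)
    (B : V ⊗[k] V →ₗ[k] V ⊗[k] V)
    (hB00 : B (b 0 ⊗ₜ[k] b 0) = (s : k) • (b 0 ⊗ₜ[k] b 0))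
    (hB01 : B (b 0 ⊗ₜ[k] b 1) = ((γ⁻¹ : kˣ) * (s⁻¹ : kˣ) : k) • (b 1 ⊗ₜ[k] b 0))
    (hB10 : B (b 1 ⊗ₜ[k] b 0)
      = ((γ⁻¹ : kˣ) * (s⁻¹ : kˣ) : k) • (b 0 ⊗ₜ[k] b 1)
        + ((γ⁻¹ : kˣ) * (s⁻¹ : kˣ) * ((q : k) - (q⁻¹ : kˣ)) : k) • (b 1 ⊗ₜ[k] b 0))
    (hB11 : B (b 1 ⊗ₜ[k] b 1)
      = ((γ⁻¹ : kˣ) * (γ⁻¹ : kˣ) * (s : kˣ) : k) • (b 1 ⊗ₜ[k] b 1)) :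
    -- B commutes with α ⊗ α:
    (TensorProduct.map α α ∘ₗ B = B ∘ₗ TensorProduct.map α α) ∧
    -- the Hom-Yang-Baxter equation (α ⊗ B)(B ⊗ α)(α ⊗ B) = (B ⊗ α)(α ⊗ B)(B ⊗ α)
    -- as operators on (V ⊗ V) ⊗ V:
    (((TensorProduct.assoc k V V V).symm.toLinearMap ∘ₗ
          TensorProduct.map α B ∘ₗ (TensorProduct.assoc k V V V).toLinearMap) ∘ₗ
        TensorProduct.map B α ∘ₗ
        ((TensorProduct.assoc k V V V).symm.toLinearMap ∘ₗ
          TensorProduct.map α B ∘ₗ (TensorProduct.assoc k V V V).toLinearMap)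
      = TensorProduct.map B α ∘ₗ
        ((TensorProduct.assoc k V V V).symm.toLinearMap ∘ₗ
          TensorProduct.map α B ∘ₗ (TensorProduct.assoc k V V V).toLinearMap) ∘ₗ
        TensorProduct.map B α) := by
  have hsi : (s : k) * ((s⁻¹ : kˣ) : k) = 1 := by exact_mod_cast s.mul_inv
  have hgi : (γ : k) * ((γ⁻¹ : kˣ) : k) = 1 := by exact_mod_cast γ.mul_inv
  have hq : (q : k) = (s : k) * (s : k) := hs.symm
  have hqu : s * s = q := Units.ext hs
  have hqi : ((q⁻¹ : kˣ) : k) = ((s⁻¹ : kˣ) : k) * ((s⁻¹ : kˣ) : k) := by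
    rw [← hqu, mul_inv_rev]; push_cast; ring
  constructor
  · refine Module.Basis.ext (b.tensorProduct b) ?_
    rintro ⟨i, j⟩
    fin_cases i <;> fin_cases j <;>
      simp only [Module.Basis.tensorProduct_apply, LinearMap.comp_apply, hα0, hα1, hB00, hB01, hB10,
        hB11, Fin.zero_eta, Fin.mk_one, Units.smul_def, TensorProduct.map_tmul, map_add,
        map_smul, TensorProduct.tmul_smul, ← TensorProduct.smul_tmul', smul_smul] <;>
      module
  · refine Module.Basis.ext ((b.tensorProduct b).tensorProduct b) ?_
    rintro ⟨⟨i, j⟩, l⟩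
    fin_cases i <;> fin_cases j <;> fin_cases l <;>
      simp only [Module.Basis.tensorProduct_apply, LinearMap.comp_apply, LinearEquiv.coe_coe,
        TensorProduct.assoc_tmul, TensorProduct.assoc_symm_tmul,
        hα0, hα1, hB00, hB01, hB10, hB11, hq, hqi,
        Fin.zero_eta, Fin.mk_one, Units.smul_def, TensorProduct.map_tmul, map_add, map_smul,
        TensorProduct.tmul_smul, ← TensorProduct.smul_tmul', smul_smul,
        TensorProduct.tmul_add, TensorProduct.add_tmul] <;>
      match_scalars <;>
      first
        | ring1
        | linear_combination (-(((γ⁻¹ : kˣ) : k))^3 * (((s : kˣ) : k)^4 * ((s⁻¹ : kˣ) : k)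
            - 2*((s : k))^2 * (((s⁻¹ : kˣ) : k))^3 + (((s⁻¹ : kˣ) : k))^5)) * hsi
        | linear_combination ((((γ⁻¹ : kˣ) : k))^6 * (((s : kˣ) : k)^4 * ((s⁻¹ : kˣ) : k)
            - 2*((s : k))^2 * (((s⁻¹ : kˣ) : k))^3 + (((s⁻¹ : kˣ) : k))^5)) * hsi
end
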